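/- Suppose f : ℝ^d → ℝ is differentiable and there exists ε ≥ 0 and a function g with ‖∇f - ∇g‖_∞ ≤ ε, where g is twice differentiable and satisfies Hess g(x) ⪰ μ·(1+‖x‖/1)^{α-2}·I for some μ > 0 and α = 2-θ ∈ (1,2] (i.e. Hess g(x) ⪰ μ(1+‖x‖)^{α-2} I for all x). Then f satisfies the dissipativity condition ⟨∇f(x), x⟩ ≥ a‖x‖^α - b for all x, with a = μ/(2(α-1)) and b = (2(‖∇g(0)‖+μ+ε)^α/μ)^{1/(α-1)}. -/

import Mathlib

lemma young_bound {μ α G ε : ℝ} (hμ : 0 < μ) (hα1 : 1 < α) (hα2 : α ≤ 2)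
    (hG : 0 ≤ G) (hε : 0 ≤ ε) {r : ℝ} (hr : 0 ≤ r) :
    (μ / (α - 1) + G + ε) * r ≤
      μ / (2 * (α - 1)) * r ^ α + (2 * (G + μ + ε) ^ α / μ) ^ (1 / (α - 1)) := by
  have ht : (0:ℝ) < α - 1 := by linarith
  set t : ℝ := α - 1 with htdef
  have ht1 : t ≤ 1 := by simp [htdef]; linarith
  have hαpos : (0:ℝ) < α := by linarith
  set C : ℝ := μ / t + G + ε with hCdef
  have hC : 0 < C := by positivity
  set a : ℝ := μ / (2 * t) with hadef
  have ha : 0 < a := by positivity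
  have haα : 0 < a * α := by positivity
  set s : ℝ := (a * α) ^ (1/α) with hsdef
  have hs : 0 < s := Real.rpow_pos_of_pos haα _
  have hsa : s ^ α = a * α := by
    rw [hsdef, ← Real.rpow_mul haα.le, one_div_mul_cancel (ne_of_gt hαpos), Real.rpow_one]
  have hpq : α.HolderConjugate (α / t) := by
    have := Real.HolderConjugate.conjExponent (p := α) hα1
    rwa [Real.conjExponent] at this
  have hy := Real.young_inequality_of_nonneg (mul_nonneg hs.le hr)
    (div_nonneg hC.le hs.le) hpq
  have hL : s * r * (C / s) = C * r := by field_simp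
  have hR1 : (s * r) ^ α / α = a * r ^ α := by
    rw [Real.mul_rpow hs.le hr, hsa]; field_simp
  -- bound the conjugate term
  have hta : 0 < t / α := by positivity
  have hne : t / α ≠ 0 := ne_of_gt hta
  have hsplit : (t/α) ^ α = (t/α) ^ t * (t/α) := by
    nth_rewrite 2 [show α = t + 1 by rw [htdef]; ring]
    exact Real.rpow_add_one hne t
  have h1 : C ^ α * (t/α) ^ t * (t/α) = (C * (t/α)) ^ α := by
    rw [Real.mul_rpow hC.le hta.le, hsplit]; ring
  have hlin : C * (t/α) ≤ G + μ + ε := by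
    have hct : C * t = μ + (G + ε) * t := by rw [hCdef]; field_simp; ring
    calc C * (t/α) = C * t / α := by ring
      _ = (μ + (G + ε) * t) / α := by rw [hct]
      _ ≤ G + μ + ε := by
          rw [div_le_iff₀ hαpos]
          nlinarith [mul_nonneg hμ.le ht.le, mul_nonneg hG ht.le, mul_nonneg hε ht.le]
  have hbase : C ^ α / (a * α) * (t/α) ^ t ≤ 2 * (G + μ + ε) ^ α / μ := by
    have h2 : C ^ α / (a * α) * (t/α) ^ t = 2 * (C * (t/α)) ^ α / μ := by
      rw [← h1, hadef]; field_simp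
      try ring
    rw [h2]
    gcongr
  have hconj : (C / s) ^ (α / t) / (α / t) ≤ (2 * (G + μ + ε) ^ α / μ) ^ (1/t) := by
    have e1 : (C / s) ^ (α / t) = (C ^ α / (a * α)) ^ (1/t) := by
      rw [← mul_one_div α t, Real.rpow_mul (div_nonneg hC.le hs.le),
        Real.div_rpow hC.le hs.le, hsa]
    have e2 : (1:ℝ) / (α / t) = ((t/α) ^ t) ^ (1/t) := by
      rw [← Real.rpow_mul hta.le, mul_one_div, div_self (ne_of_gt ht), Real.rpow_one,
        one_div_div]
    rw [div_eq_mul_one_div, e1, e2, ← Real.mul_rpow (by positivity) (by positivity)]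
    exact Real.rpow_le_rpow (by positivity) hbase (by positivity)
  calc C * r = s * r * (C / s) := hL.symm
    _ ≤ (s * r) ^ α / α + (C / s) ^ (α/t) / (α/t) := hy
    _ ≤ a * r ^ α + (2 * (G + μ + ε) ^ α / μ) ^ (1/t) := by
        exact by rw [hR1]; exact add_le_add_right hconj _
    _ = μ / (2 * t) * r ^ α + (2 * (G + μ + ε) ^ α / μ) ^ (1/t) := by rw [hadef]

theorem dissipativity_of_hessian_lower_bound {d : ℕ}
    (f g : EuclideanSpace ℝ (Fin d) → ℝ)
    (f' g' : EuclideanSpace ℝ (Fin d) → EuclideanSpace ℝ (Fin d))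
    (μ α ε : ℝ) (hμ : 0 < μ) (hα1 : 1 < α) (hα2 : α ≤ 2) (hε : 0 ≤ ε)
    (hgradf : ∀ x, HasGradientAt f (f' x) x)
    (hgradg : ∀ x, HasGradientAt g (g' x) x)
    (hg'diff : Differentiable ℝ g')
    (hHess : ∀ x v, μ * (1 + ‖x‖) ^ (α - 2) * ‖v‖ ^ 2 ≤ (inner ℝ (fderiv ℝ g' x v) v : ℝ))
    (hpert : ∀ x, ‖f' x - g' x‖ ≤ ε) :
    ∀ x, (μ / (2 * (α - 1))) * ‖x‖ ^ α
        - (2 * (‖g' 0‖ + μ + ε) ^ α / μ) ^ (1 / (α - 1))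
      ≤ (inner ℝ (f' x) x : ℝ) := by
  intro x
  have ht : (0:ℝ) < α - 1 := by linarith
  have hb : (0:ℝ) ≤ (2 * (‖g' 0‖ + μ + ε) ^ α / μ) ^ (1 / (α - 1)) := by positivity
  rcases eq_or_ne x 0 with hx0 | hx0
  · subst hx0
    simp only [norm_zero, inner_zero_right]
    rw [Real.zero_rpow (by positivity)]
    linarith
  have hn : 0 < ‖x‖ := norm_pos_iff.mpr hx0
  set n : ℝ := ‖x‖ with hndef
  -- the auxiliary function along the ray
  set φ : ℝ → ℝ := fun t =>
    (inner ℝ x (g' (t • x)) : ℝ) - μ * n / (α - 1) * (1 + t * n) ^ (α - 1) with hφdef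
  have hderiv : ∀ t : ℝ, 0 ≤ t → HasDerivAt φ
      ((inner ℝ x (fderiv ℝ g' (t • x) x) : ℝ) - μ * n ^ 2 * (1 + t * n) ^ (α - 2)) t := by
    intro t htt
    have hpos : 0 < 1 + t * n := by positivity
    have h1 : HasDerivAt (fun t : ℝ => t • x) x t := by
      simpa using (hasDerivAt_id t).smul_const x
    have h2 : HasDerivAt (fun t : ℝ => g' (t • x)) (fderiv ℝ g' (t • x) x) t :=
      (hg'diff (t • x)).hasFDerivAt.comp_hasDerivAt t h1
    have h3 : HasDerivAt (fun t : ℝ => (inner ℝ x (g' (t • x)) : ℝ))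
        (inner ℝ x (fderiv ℝ g' (t • x) x) : ℝ) t :=
      (innerSL ℝ x).hasFDerivAt.comp_hasDerivAt t h2
    have haff : HasDerivAt (fun t : ℝ => 1 + t * n) n t := by
      simpa using ((hasDerivAt_id t).mul_const n).const_add 1
    have hpow : HasDerivAt (fun t : ℝ => (1 + t * n) ^ (α - 1))
        ((α - 1) * (1 + t * n) ^ (α - 2) * n) t := by
      have := (Real.hasDerivAt_rpow_const (x := 1 + t * n) (p := α - 1)
        (Or.inl (ne_of_gt hpos))).comp t haff
      simpa [Function.comp_def, show α - 1 - 1 = α - 2 by ring] using this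
    have : HasDerivAt (fun t : ℝ => (inner ℝ x (g' (t • x)) : ℝ) - μ * n / (α - 1) * (1 + t * n) ^ (α - 1)) _ t :=
      h3.sub (hpow.const_mul (μ * n / (α - 1)))
    convert this using 1
    have hne1 : α - 1 ≠ 0 := ne_of_gt ht
    field_simp
  have hmono : MonotoneOn φ (Set.Ici (0:ℝ)) := by
    apply monotoneOn_of_deriv_nonneg (convex_Ici 0)
    · exact fun t htt => (hderiv t htt).continuousAt.continuousWithinAt
    · rw [interior_Ici]
      exact fun t htt => ((hderiv t (le_of_lt htt)).differentiableAt).differentiableWithinAt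
    · rw [interior_Ici]
      intro t htt
      rw [(hderiv t htt.le).deriv]
      have hH := hHess (t • x) x
      have hns : ‖t • x‖ = t * n := by
        rw [norm_smul, Real.norm_eq_abs, abs_of_nonneg htt.le]
      rw [hns] at hH
      rw [real_inner_comm] at hH
      linarith
  have hkey := hmono Set.self_mem_Ici (by norm_num : (1:ℝ) ∈ Set.Ici 0) zero_le_one
  have hφ0 : φ 0 = (inner ℝ x (g' 0) : ℝ) - μ * n / (α - 1) := by
    simp [hφdef, Real.one_rpow]
  have hφ1 : φ 1 = (inner ℝ x (g' x) : ℝ) - μ * n / (α - 1) * (1 + n) ^ (α - 1) := by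
    simp [hφdef]
  rw [hφ0, hφ1] at hkey
  -- Cauchy-Schwarz bounds
  have hCS1 : -(‖g' 0‖ * n) ≤ (inner ℝ x (g' 0) : ℝ) := by
    have := abs_real_inner_le_norm x (g' 0)
    rw [abs_le] at this
    nlinarith [this.1]
  have hCS2 : -(ε * n) ≤ (inner ℝ (f' x - g' x) x : ℝ) := by
    have h1 := abs_real_inner_le_norm (f' x - g' x) x
    rw [abs_le] at h1
    have h2 := hpert x
    nlinarith [h1.1, hn.le]
  -- (1+n)^(α-1) ≥ n^(α-1) and n * n^(α-1) = n^α
  have hr1 : n ^ (α - 1) ≤ (1 + n) ^ (α - 1) :=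
    Real.rpow_le_rpow hn.le (by linarith) (by linarith)
  have hr2 : n ^ α = n ^ (α - 1) * n := by
    have h := Real.rpow_add_one (ne_of_gt hn) (α - 1)
    rw [show α - 1 + 1 = α from by ring] at h
    exact h
  have hinner : (inner ℝ (f' x) x : ℝ)
      = (inner ℝ (f' x - g' x) x : ℝ) + (inner ℝ x (g' x) : ℝ) := by
    rw [inner_sub_left, real_inner_comm x (g' x)]
    ring
  have hyoung := young_bound hμ hα1 hα2 (norm_nonneg (g' 0)) hε hn.le
  have hsplitdiv : μ / (α - 1) = μ / (2 * (α - 1)) + μ / (2 * (α - 1)) := by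
    field_simp; ring
  -- combine
  have hc1 : μ * n / (α - 1) * n ^ (α - 1) ≤ μ * n / (α - 1) * (1 + n) ^ (α - 1) := by
    have : 0 ≤ μ * n / (α - 1) := by positivity
    exact mul_le_mul_of_nonneg_left hr1 this
  have hc2 : μ * n / (α - 1) * n ^ (α - 1) = μ / (α - 1) * n ^ α := by
    rw [hr2]; ring
  have hsn : μ / (α - 1) * n ^ α
      = μ / (2 * (α - 1)) * n ^ α + μ / (2 * (α - 1)) * n ^ α := by
    rw [hsplitdiv]; ring
  rw [hinner]
  ring_nf at hkey hyoung hc1 hc2 hsn hCS1 hCS2 ⊢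
  linarith
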